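/- No coalition of men can manipulate the men-proposing deferred acceptance rule: there is no preference profile P, nonempty set of men M' ⊆ M, and joint misreport P̃_{M'} such that every man in M' is strictly better off under D^M(P̃_{M'}, P_{-M'}) than under D^M(P) according to his true preferences (Dubins–Freedman theorem). -/

import Mathlib

/-- A one-to-one matching between men `M` and women `W`; `none` means unmatched. -/
structure Matching (M W : Type*) where
  menMatch : M → Option W
  womenMatch : W → Option M
  consistent : ∀ m w, menMatch m = some w ↔ womenMatch w = some m

/-- A preference profile: each man has a strict linear order over `W ∪ {∅}`
(encoded as `Option W`, with `none` the outside option), and each woman over `M ∪ {∅}`. -/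
structure Profile (M W : Type*) where
  menPref : M → LinearOrder (Option W)
  womenPref : W → LinearOrder (Option M)

variable {M W : Type*}

def IndividuallyRational (μ : Matching M W) (P : Profile M W) : Prop :=
  (∀ m, (P.menPref m).le none (μ.menMatch m)) ∧
  (∀ w, (P.womenPref w).le none (μ.womenMatch w))

def Blocks (m : M) (w : W) (μ : Matching M W) (P : Profile M W) : Prop :=
  (P.menPref m).lt (μ.menMatch m) (some w) ∧
  (P.womenPref w).lt (μ.womenMatch w) (some m)

def Stable (μ : Matching M W) (P : Profile M W) : Prop :=
  IndividuallyRational μ P ∧ ∀ m w, ¬ Blocks m w μ P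

/-- The men-optimal stable matching: stable, and every man weakly prefers it to
any stable matching.  This characterizes the outcome of the men-proposing
deferred acceptance (MPDA) algorithm. -/
def MenOptimalStable (μ : Matching M W) (P : Profile M W) : Prop :=
  Stable μ P ∧
    ∀ ν : Matching M W, Stable ν P → ∀ m, (P.menPref m).le (ν.menMatch m) (μ.menMatch m)

/-- The women-optimal stable matching, i.e. the outcome of women-proposing DA. -/
def WomenOptimalStable (μ : Matching M W) (P : Profile M W) : Prop :=
  Stable μ P ∧
    ∀ ν : Matching M W, Stable ν P → ∀ w, (P.womenPref w).le (ν.womenMatch w) (μ.womenMatch w)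

def Matching.empty (M W : Type*) : Matching M W :=
  ⟨fun _ => none, fun _ => none, by intro m w; simp⟩

/-- The men-proposing deferred acceptance rule `D^M`. -/
noncomputable def mpda (P : Profile M W) : Matching M W :=
  letI := Classical.dec (∃ μ : Matching M W, MenOptimalStable μ P)
  if h : ∃ μ : Matching M W, MenOptimalStable μ P then h.choose else Matching.empty M W

/-- The women-proposing deferred acceptance rule `D^W`. -/
noncomputable def wpda (P : Profile M W) : Matching M W :=
  letI := Classical.dec (∃ μ : Matching M W, WomenOptimalStable μ P)
  if h : ∃ μ : Matching M W, WomenOptimalStable μ P then h.choose else Matching.empty M W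

/-- A domain of preference profiles: a set of admissible preferences for each agent. -/
structure Domain (M W : Type*) where
  men : M → Set (LinearOrder (Option W))
  women : W → Set (LinearOrder (Option M))

/-- Membership of a profile in (the product domain generated by) a domain. -/
def Domain.mem (D : Domain M W) (P : Profile M W) : Prop :=
  (∀ m, P.menPref m ∈ D.men m) ∧ (∀ w, P.womenPref w ∈ D.women w)

def Profile.updateMan [DecidableEq M] (P : Profile M W) (m : M)
    (p : LinearOrder (Option W)) : Profile M W :=
  ⟨Function.update P.menPref m p, P.womenPref⟩

def Profile.updateWoman [DecidableEq W] (P : Profile M W) (w : W)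
    (p : LinearOrder (Option M)) : Profile M W :=
  ⟨P.menPref, Function.update P.womenPref w p⟩

/-- A matching rule is stable on a domain if it selects a stable matching at
every profile of the domain. -/
def StableOn (D : Domain M W) (φ : Profile M W → Matching M W) : Prop :=
  ∀ P, D.mem P → Stable (φ P) P

/-- Strategy-proofness on a domain: no single agent can strictly gain by
misreporting an admissible preference. -/
def StrategyProofOn [DecidableEq M] [DecidableEq W] (D : Domain M W)
    (φ : Profile M W → Matching M W) : Prop :=
  ∀ P, D.mem P →
    (∀ m p, p ∈ D.men m →
      (P.menPref m).le ((φ (P.updateMan m p)).menMatch m) ((φ P).menMatch m)) ∧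
    (∀ w p, p ∈ D.women w →
      (P.womenPref w).le ((φ (P.updateWoman w p)).womenMatch w) ((φ P).womenMatch w))

/-- A coalition `(Sm, Sw)` manipulates `φ` at `P` via the admissible profile `Q`
(which agrees with `P` outside the coalition): every coalition member is
strictly better off at `φ Q` than at `φ P` according to true preferences. -/
def Manipulation (D : Domain M W) (φ : Profile M W → Matching M W)
    (P Q : Profile M W) (Sm : Set M) (Sw : Set W) : Prop :=
  D.mem P ∧ D.mem Q ∧
  (∀ m ∉ Sm, Q.menPref m = P.menPref m) ∧
  (∀ w ∉ Sw, Q.womenPref w = P.womenPref w) ∧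
  (∀ m ∈ Sm, (P.menPref m).lt ((φ P).menMatch m) ((φ Q).menMatch m)) ∧
  (∀ w ∈ Sw, (P.womenPref w).lt ((φ P).womenMatch w) ((φ Q).womenMatch w))

/-- Group strategy-proofness on a domain: no nonempty coalition can manipulate. -/
def GroupStrategyProofOn (D : Domain M W) (φ : Profile M W → Matching M W) : Prop :=
  ¬ ∃ (P Q : Profile M W) (Sm : Set M) (Sw : Set W),
      (Sm.Nonempty ∨ Sw.Nonempty) ∧ Manipulation D φ P Q Sm Sw

/-- Top dominance for women. -/
def TopDominanceWomen (D : Domain M W) : Prop :=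
  ∀ w : W, ∀ x : M, ∀ y z : Option M,
    (∃ P ∈ D.women w, P.lt y (some x) ∧ P.lt z y ∧ P.le none y) →
      ¬ ∃ P' ∈ D.women w, P'.lt z (some x) ∧ P'.lt y z ∧ P'.le none z

/-- Top dominance for men. -/
def TopDominanceMen (D : Domain M W) : Prop :=
  ∀ m : M, ∀ x : W, ∀ y z : Option W,
    (∃ P ∈ D.men m, P.lt y (some x) ∧ P.lt z y ∧ P.le none y) →
      ¬ ∃ P' ∈ D.men m, P'.lt z (some x) ∧ P'.lt y z ∧ P'.le none z

/-- Unrestricted top pairs for men. -/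
def UnrestrictedTopPairsMen (D : Domain M W) : Prop :=
  ∀ m : M,
    (∀ w w' : W, w ≠ w' → ∃ P ∈ D.men m, P.lt (some w') (some w) ∧
        ∀ z : Option W, z ≠ some w → z ≠ some w' → P.lt z (some w')) ∧
    (∀ w : W, ∃ P ∈ D.men m, P.lt none (some w) ∧
        ∀ z : Option W, z ≠ some w → z ≠ none → P.lt z none) ∧
    (∃ P ∈ D.men m, ∀ z : Option W, z ≠ none → P.lt z none)

/-- Unrestricted top pairs for women. -/
def UnrestrictedTopPairsWomen (D : Domain M W) : Prop :=
  ∀ w : W,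
    (∀ m m' : M, m ≠ m' → ∃ P ∈ D.women w, P.lt (some m') (some m) ∧
        ∀ z : Option M, z ≠ some m → z ≠ some m' → P.lt z (some m')) ∧
    (∀ m : M, ∃ P ∈ D.women w, P.lt none (some m) ∧
        ∀ z : Option M, z ≠ some m → z ≠ none → P.lt z none) ∧
    (∃ P ∈ D.women w, ∀ z : Option M, z ≠ none → P.lt z none)

/-- Single-peakedness of a preference over `Option α` with respect to a prior
order `ord` on `α`:  moving away from the peak (the most preferred element of
`α`) on either side makes the preference decline. -/
def SinglePeaked {α : Type*} (ord : LinearOrder α) (P : LinearOrder (Option α)) : Prop :=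
  ∀ peak : α, (∀ a : α, P.le (some a) (some peak)) →
    ∀ a b : α, ((ord.le peak a ∧ ord.lt a b) ∨ (ord.lt b a ∧ ord.le a peak)) →
      P.lt (some b) (some a)

/-- The maximal single-peaked domain with respect to orders on men and women. -/
def maximalSinglePeakedDomain (ordM : LinearOrder M) (ordW : LinearOrder W) : Domain M W :=
  ⟨fun _ => {P | SinglePeaked ordW P}, fun _ => {P | SinglePeaked ordM P}⟩

/-- A domain is single-peaked if all admissible preferences are single-peaked. -/
def Domain.SinglePeakedDomain (D : Domain M W) (ordM : LinearOrder M)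
    (ordW : LinearOrder W) : Prop :=
  (∀ m, ∀ P ∈ D.men m, SinglePeaked ordW P) ∧ (∀ w, ∀ P ∈ D.women w, SinglePeaked ordM P)

/-- Anonymity: all men share the same admissible set, and all women do too. -/
def Domain.Anonymous (D : Domain M W) : Prop :=
  (∀ m m' : M, D.men m = D.men m') ∧ (∀ w w' : W, D.women w = D.women w')

/-- Cyclical inclusion for men. -/
def CyclicalInclusionMen (D : Domain M W) : Prop :=
  ∀ m : M,
    (∃ P ∈ D.men m, ∀ z : Option W, z ≠ none → P.lt z none) ∧
    (∀ w w' : W,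
      (∃ P ∈ D.men m, P.lt (some w') (some w) ∧ P.lt none (some w')) →
      (∃ P ∈ D.men m, P.lt (some w) (some w') ∧ P.lt none (some w)))

/-- Cyclical inclusion for women. -/
def CyclicalInclusionWomen (D : Domain M W) : Prop :=
  ∀ w : W,
    (∃ P ∈ D.women w, ∀ z : Option M, z ≠ none → P.lt z none) ∧
    (∀ m m' : M,
      (∃ P ∈ D.women w, P.lt (some m') (some m) ∧ P.lt none (some m')) →
      (∃ P ∈ D.women w, P.lt (some m) (some m') ∧ P.lt none (some m)))

/-- The unrestricted domain: every strict linear order is admissible. -/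
def fullDomain (M W : Type*) : Domain M W :=
  ⟨fun _ => Set.univ, fun _ => Set.univ⟩


set_option linter.unusedSectionVars false
section DA
open Classical
variable {M W : Type*}

/-- maximum of a nonempty finset under an explicit linear order -/
noncomputable def obest {α : Type*} (o : LinearOrder α) (s : Finset α) (h : s.Nonempty) : α :=
  letI := o; s.max' h

lemma obest_mem {α : Type*} (o : LinearOrder α) (s : Finset α) (h : s.Nonempty) :
    obest o s h ∈ s := by
  letI := o; exact s.max'_mem h

lemma le_obest {α : Type*} (o : LinearOrder α) {s : Finset α} (h : s.Nonempty) {x : α}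
    (hx : x ∈ s) : o.le x (obest o s h) := by
  letI := o; exact s.le_max' x hx

variable [Fintype M] [Fintype W]

noncomputable def cands (R : M → Finset W) (m : M) : Finset (Option W) :=
  insert none ((Finset.univ \ R m).image some)

lemma cands_ne (R : M → Finset W) (m : M) : (cands R m).Nonempty :=
  ⟨none, Finset.mem_insert_self _ _⟩

noncomputable def daProp (P : Profile M W) (R : M → Finset W) (m : M) : Option W :=
  obest (P.menPref m) (cands R m) (cands_ne R m)

lemma none_le_prop (P : Profile M W) (R : M → Finset W) (m : M) :
    (P.menPref m).le none (daProp P R m) :=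
  le_obest _ _ (Finset.mem_insert_self _ _)

lemma le_prop (P : Profile M W) (R : M → Finset W) {m : M} {w : W} (hw : w ∉ R m) :
    (P.menPref m).le (some w) (daProp P R m) :=
  le_obest _ _ (by simp [cands, hw])

lemma prop_not_rejected (P : Profile M W) (R : M → Finset W) {m : M} {w : W}
    (h : daProp P R m = some w) : w ∉ R m := by
  have := obest_mem (P.menPref m) (cands R m) (cands_ne R m)
  rw [show obest (P.menPref m) (cands R m) (cands_ne R m) = daProp P R m from rfl, h] at this
  simpa [cands] using this

lemma prop_congr (P : Profile M W) {R R' : M → Finset W} {m : M} (h : R m = R' m) :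
    daProp P R m = daProp P R' m := by
  unfold daProp cands
  congr 1
  rw [h]

/-- set of men proposing to `w` -/
noncomputable def daProps (P : Profile M W) (R : M → Finset W) (w : W) : Finset M :=
  Finset.univ.filter (fun m => daProp P R m = some w)

noncomputable def daHold (P : Profile M W) (R : M → Finset W) (w : W) : Option M :=
  obest (P.womenPref w) (insert none ((daProps P R w).image some))
    ⟨none, Finset.mem_insert_self _ _⟩

lemma none_le_hold (P : Profile M W) (R : M → Finset W) (w : W) :
    (P.womenPref w).le none (daHold P R w) :=
  le_obest _ _ (Finset.mem_insert_self _ _)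

lemma le_hold (P : Profile M W) (R : M → Finset W) {w : W} {m : M}
    (hm : daProp P R m = some w) : (P.womenPref w).le (some m) (daHold P R w) :=
  le_obest _ _ (by simp [daProps, hm])

lemma hold_mem (P : Profile M W) (R : M → Finset W) {w : W} {m : M}
    (h : daHold P R w = some m) : daProp P R m = some w := by
  have := obest_mem (P.womenPref w) (insert none ((daProps P R w).image some))
    ⟨none, Finset.mem_insert_self _ _⟩
  rw [show obest (P.womenPref w) _ _ = daHold P R w from rfl, h] at this
  simp [daProps] at this
  exact this

noncomputable def daStep (P : Profile M W) (R : M → Finset W) (m : M) : Finset W :=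
  match daProp P R m with
  | none => R m
  | some w => if daHold P R w = some m then R m else insert w (R m)

lemma subset_step (P : Profile M W) (R : M → Finset W) (m : M) : R m ⊆ daStep P R m := by
  unfold daStep
  rcases h : daProp P R m with _ | w
  · exact Finset.Subset.refl _
  · dsimp only
    split
    · exact Finset.Subset.refl _
    · exact Finset.subset_insert _ _

lemma mem_step_iff (P : Profile M W) (R : M → Finset W) (m : M) (w : W) :
    w ∈ daStep P R m ↔ w ∈ R m ∨ (daProp P R m = some w ∧ daHold P R w ≠ some m) := by
  unfold daStep
  rcases h : daProp P R m with _ | w'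
  · simp
  · dsimp only
    by_cases hh : daHold P R w' = some m
    · simp only [if_pos hh]
      constructor
      · exact Or.inl
      · rintro (h' | ⟨h1, h2⟩)
        · exact h'
        · cases Option.some_inj.mp h1; exact absurd hh h2
    · simp only [if_neg hh, Finset.mem_insert]
      constructor
      · rintro (rfl | h')
        · exact Or.inr ⟨rfl, hh⟩
        · exact Or.inl h'
      · rintro (h' | ⟨h1, h2⟩)
        · exact Or.inr h'
        · exact Or.inl (Option.some_inj.mp h1.symm)

lemma step_eq_of_held (P : Profile M W) (R : M → Finset W) {m : M} {w : W}
    (h1 : daProp P R m = some w) (h2 : daHold P R w = some m) : daStep P R m = R m := by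
  unfold daStep; rw [h1]; simp [h2]

noncomputable def iterR (P : Profile M W) : ℕ → (M → Finset W)
  | 0 => fun _ => ∅
  | n + 1 => daStep P (iterR P n)

lemma iterR_subset_succ (P : Profile M W) (n : ℕ) (m : M) :
    iterR P n m ⊆ iterR P (n + 1) m := subset_step P (iterR P n) m

lemma iterR_subset (P : Profile M W) {a b : ℕ} (h : a ≤ b) (m : M) :
    iterR P a m ⊆ iterR P b m := by
  induction b with
  | zero => cases Nat.le_zero.mp h; exact Finset.Subset.refl _
  | succ b ih =>
    rcases Nat.lt_or_ge a (b+1) with h' | h'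
    · exact (ih (Nat.lt_succ_iff.mp h')).trans (iterR_subset_succ P b m)
    · cases Nat.le_antisymm h h'; exact Finset.Subset.refl _

/-- termination: some iterate is a fixed point -/
lemma exists_fixed (P : Profile M W) : ∃ n, iterR P (n + 1) = iterR P n := by
  by_contra hc
  push_neg at hc
  have key : ∀ n, n ≤ Fintype.card M * Fintype.card W + 1 →
      n ≤ ∑ m, (iterR P n m).card := by
    intro n
    induction n with
    | zero => intro _; exact Nat.zero_le _
    | succ n ih =>
      intro hn
      have h1 : n ≤ ∑ m, (iterR P n m).card := ih (Nat.le_of_succ_le hn)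
      have h2 : ∑ m, (iterR P n m).card < ∑ m, (iterR P (n+1) m).card := by
        have hne : iterR P (n+1) ≠ iterR P n := hc n
        have : ∃ m, iterR P n m ⊂ iterR P (n+1) m := by
          by_contra hall
          push_neg at hall
          apply hne
          funext m
          exact Finset.Subset.antisymm
            (by by_contra hss
                exact hall m ⟨iterR_subset_succ P n m, hss⟩) (iterR_subset_succ P n m)
        obtain ⟨m, hm⟩ := this
        apply Finset.sum_lt_sum (fun i _ => Finset.card_le_card (iterR_subset_succ P n i))
        exact ⟨m, Finset.mem_univ m, Finset.card_lt_card hm⟩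
      omega
  have hb := key _ (le_refl _)
  have : ∑ m, (iterR P (Fintype.card M * Fintype.card W + 1) m).card ≤
      Fintype.card M * Fintype.card W := by
    calc ∑ m, (iterR P (Fintype.card M * Fintype.card W + 1) m).card
        ≤ ∑ _m : M, Fintype.card W :=
          Finset.sum_le_sum (fun i _ => (Finset.card_le_card (Finset.subset_univ _)).trans
            (le_of_eq (Finset.card_univ)))
      _ = Fintype.card M * Fintype.card W := by
          rw [Finset.sum_const, Finset.card_univ, smul_eq_mul]
  omega

noncomputable def daN (P : Profile M W) : ℕ := (exists_fixed P).choose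

lemma daN_fix (P : Profile M W) : iterR P (daN P + 1) = iterR P (daN P) :=
  (exists_fixed P).choose_spec

noncomputable def daR (P : Profile M W) : M → Finset W := iterR P (daN P)

lemma daR_fix (P : Profile M W) : daStep P (daR P) = daR P := daN_fix P

/-! order helpers for explicit linear orders -/

section OrderHelp
variable {α : Type*} (o : LinearOrder α)

lemma ole_trans {a b c : α} (h1 : o.le a b) (h2 : o.le b c) : o.le a c := by
  letI := o; exact le_trans h1 h2

lemma ole_antisymm {a b : α} (h1 : o.le a b) (h2 : o.le b a) : a = b := by
  letI := o; exact le_antisymm h1 h2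

lemma olt_of_le_ne {a b : α} (h1 : o.le a b) (h2 : a ≠ b) : o.lt a b := by
  letI := o; exact lt_of_le_of_ne h1 h2

lemma ole_of_not_lt {a b : α} (h : ¬ o.lt a b) : o.le b a := by
  letI := o; exact not_lt.mp h

lemma olt_not_le {a b : α} (h : o.lt a b) : ¬ o.le b a := by
  letI := o; exact not_le.mpr h

lemma olt_of_lt_of_le {a b c : α} (h1 : o.lt a b) (h2 : o.le b c) : o.lt a c := by
  letI := o; exact lt_of_lt_of_le h1 h2

lemma olt_of_le_of_lt {a b c : α} (h1 : o.le a b) (h2 : o.lt b c) : o.lt a c := by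
  letI := o; exact lt_of_le_of_lt h1 h2

lemma olt_asymm {a b : α} (h1 : o.lt a b) (h2 : o.lt b a) : False := by
  letI := o; exact absurd h1 (lt_asymm h2)

lemma olt_ne {a b : α} (h : o.lt a b) : a ≠ b := by
  letI := o; exact ne_of_lt h

lemma ole_refl (a : α) : o.le a a := by letI := o; exact le_refl a

lemma olt_le {a b : α} (h : o.lt a b) : o.le a b := by letI := o; exact le_of_lt h

end OrderHelp

noncomputable def daMatch (P : Profile M W) : Matching M W where
  menMatch m := daProp P (daR P) m
  womenMatch w := daHold P (daR P) w
  consistent := by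
    intro m w
    constructor
    · intro h
      by_contra hne
      have hmem : w ∈ daStep P (daR P) m :=
        (mem_step_iff P (daR P) m w).mpr (Or.inr ⟨h, hne⟩)
      rw [congrFun (daR_fix P) m] at hmem
      exact prop_not_rejected P (daR P) h hmem
    · exact hold_mem P (daR P)

lemma prop_anti (P : Profile M W) {R R' : M → Finset W} (m : M) (h : R m ⊆ R' m) :
    (P.menPref m).le (daProp P R' m) (daProp P R m) := by
  have hmem := obest_mem (P.menPref m) (cands R' m) (cands_ne R' m)
  have hsub : cands R' m ⊆ cands R m := by
    apply Finset.insert_subset_insert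
    apply Finset.image_subset_image
    exact Finset.sdiff_subset_sdiff (Finset.Subset.refl _) h
  exact le_obest _ _ (hsub hmem)

lemma hold_mono_step (P : Profile M W) (R : M → Finset W) (w : W) :
    (P.womenPref w).le (daHold P R w) (daHold P (daStep P R) w) := by
  rcases hh : daHold P R w with _ | m
  · exact none_le_hold P _ w
  · have hm := hold_mem P R hh
    have hstep : daStep P R m = R m := step_eq_of_held P R hm hh
    exact le_hold P _ ((prop_congr P hstep).trans hm)

lemma hold_mono (P : Profile M W) {a b : ℕ} (h : a ≤ b) (w : W) :
    (P.womenPref w).le (daHold P (iterR P a) w) (daHold P (iterR P b) w) := by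
  induction b with
  | zero => cases Nat.le_zero.mp h; exact ole_refl _ _
  | succ b ih =>
    rcases Nat.lt_or_ge a (b+1) with h' | h'
    · exact ole_trans _ (ih (Nat.lt_succ_iff.mp h')) (hold_mono_step P (iterR P b) w)
    · cases Nat.le_antisymm h h'; exact ole_refl _ _

lemma rejected_lt_hold (P : Profile M W) :
    ∀ n m w, w ∈ iterR P n m → (P.womenPref w).lt (some m) (daHold P (iterR P n) w) := by
  intro n
  induction n with
  | zero => intro m w hw; simp [iterR] at hw
  | succ n ih =>
    intro m w hw
    rcases (mem_step_iff P (iterR P n) m w).mp hw with hold | ⟨h1, h2⟩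
    · exact olt_of_lt_of_le _ (ih m w hold) (hold_mono_step P (iterR P n) w)
    · have hle : (P.womenPref w).le (some m) (daHold P (iterR P n) w) := le_hold P _ h1
      have hlt : (P.womenPref w).lt (some m) (daHold P (iterR P n) w) :=
        olt_of_le_ne _ hle (fun he => h2 he.symm)
      exact olt_of_lt_of_le _ hlt (hold_mono_step P (iterR P n) w)

lemma daMatch_stable (P : Profile M W) : Stable (daMatch P) P := by
  refine ⟨⟨fun m => none_le_prop P _ m, fun w => none_le_hold P _ w⟩, ?_⟩
  rintro m w ⟨h1, h2⟩
  have hw : w ∈ daR P m := by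
    by_contra hw
    exact olt_not_le _ h1 (le_prop P _ hw)
  exact olt_asymm _ h2 (rejected_lt_hold P (daN P) m w hw)

lemma stable_not_rejected (P : Profile M W) (ν : Matching M W) (hν : Stable ν P) :
    ∀ n m w, w ∈ iterR P n m → ν.menMatch m ≠ some w := by
  intro n
  induction n with
  | zero => intro m w hw; simp [iterR] at hw
  | succ n ih =>
    intro m w hw hνm
    rcases (mem_step_iff P (iterR P n) m w).mp hw with hold | ⟨h1, h2⟩
    · exact ih m w hold hνm
    · have hνw : ν.womenMatch w = some m := (ν.consistent m w).mp hνm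
      have hle : (P.womenPref w).le (some m) (daHold P (iterR P n) w) := le_hold P _ h1
      rcases hhold : daHold P (iterR P n) w with _ | m'
      · rw [hhold] at hle
        have h3 : (P.womenPref w).le none (some m) := by
          have := hν.1.2 w; rwa [hνw] at this
        exact absurd (ole_antisymm _ hle h3) (by simp)
      · have hm'ne : m' ≠ m := fun he => h2 (he ▸ hhold)
        have hpm' : daProp P (iterR P n) m' = some w := hold_mem P _ hhold
        have hmanside : (P.menPref m').lt (ν.menMatch m') (some w) := by
          have hlem : (P.menPref m').le (ν.menMatch m') (some w) := by
            rcases hν' : ν.menMatch m' with _ | w''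
            · rw [← hpm']; exact none_le_prop P _ m'
            · have hw'' : w'' ∉ iterR P n m' := fun hmem => ih m' w'' hmem hν'
              rw [← hpm']; exact le_prop P _ hw''
          refine olt_of_le_ne _ hlem (fun he => ?_)
          have : ν.womenMatch w = some m' := (ν.consistent m' w).mp he
          rw [hνw] at this
          exact hm'ne (Option.some_inj.mp this.symm)
        have hwomside : (P.womenPref w).lt (ν.womenMatch w) (some m') := by
          rw [hνw]
          rw [hhold] at hle
          exact olt_of_le_ne _ hle (by simpa using hm'ne.symm)
        exact hν.2 m' w ⟨hmanside, hwomside⟩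


lemma daMatch_optimal (P : Profile M W) : MenOptimalStable (daMatch P) P := by
  refine ⟨daMatch_stable P, ?_⟩
  intro ν hν m
  rcases hνm : ν.menMatch m with _ | w
  · exact none_le_prop P _ m
  · exact le_prop P _ (fun hw => stable_not_rejected P ν hν (daN P) m w hw hνm)

lemma Matching.ext' {μ ν : Matching M W} (h1 : μ.menMatch = ν.menMatch)
    (h2 : μ.womenMatch = ν.womenMatch) : μ = ν := by
  cases μ; cases ν
  dsimp at h1 h2
  subst h1; subst h2
  rfl

lemma menOptimalStable_unique (P : Profile M W) {μ ν : Matching M W}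
    (hμ : MenOptimalStable μ P) (hν : MenOptimalStable ν P) : μ = ν := by
  have hm : μ.menMatch = ν.menMatch := by
    funext m
    exact ole_antisymm _ (hν.2 μ hμ.1 m) (hμ.2 ν hν.1 m)
  refine Matching.ext' hm ?_
  funext w
  rcases hw : ν.womenMatch w with _ | m
  · rcases hw' : μ.womenMatch w with _ | m'
    · rfl
    · have : μ.menMatch m' = some w := (μ.consistent m' w).mpr hw'
      rw [hm] at this
      rw [(ν.consistent m' w).mp this] at hw
      exact absurd hw (by simp)
  · have : ν.menMatch m = some w := (ν.consistent m w).mpr hw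
    rw [← hm] at this
    exact (μ.consistent m w).mp this

lemma mpda_eq (P : Profile M W) : mpda P = daMatch P := by
  have hex : ∃ μ : Matching M W, MenOptimalStable μ P := ⟨daMatch P, daMatch_optimal P⟩
  have : mpda P = hex.choose := by
    unfold mpda
    rw [dif_pos hex]
  rw [this]
  exact menOptimalStable_unique P hex.choose_spec (daMatch_optimal P)


lemma iterR_stab (P : Profile M W) : ∀ n, daN P ≤ n → iterR P n = iterR P (daN P) := by
  intro n
  induction n with
  | zero => intro h; rw [Nat.le_zero.mp h]
  | succ n ih =>
    intro h
    rcases Nat.lt_or_ge n (daN P) with h' | h'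
    · have : daN P = n + 1 := by omega
      rw [this]
    · have h2 : iterR P (n+1) = daStep P (iterR P n) := rfl
      rw [h2, ih h']
      exact daR_fix P

lemma iterR_subset_daR (P : Profile M W) (n : ℕ) (m : M) : iterR P n m ⊆ daR P m := by
  rcases Nat.lt_or_ge n (daN P) with h | h
  · exact iterR_subset P (le_of_lt h) m
  · rw [show iterR P n = iterR P (daN P) from iterR_stab P n h]
    exact Finset.Subset.refl _

/-- the final match is always weakly below the current proposal -/
lemma le_prop_iter (P : Profile M W) (n : ℕ) (m : M) :
    (P.menPref m).le ((daMatch P).menMatch m) (daProp P (iterR P n) m) := by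
  rcases hm : (daMatch P).menMatch m with _ | w
  · exact none_le_prop P _ m
  · have hw : w ∉ daR P m := prop_not_rejected P (daR P) hm
    exact le_prop P _ (fun hmem => hw (iterR_subset_daR P n m hmem))

/-- at round 0 every option is available -/
lemma top_prop (P : Profile M W) (m : M) (x : Option W) :
    (P.menPref m).le x (daProp P (iterR P 0) m) := by
  apply le_obest
  rcases x with _ | w
  · exact Finset.mem_insert_self _ _
  · simp [cands, iterR]

/-- persistence: once a man proposes to his final match he keeps doing so -/
lemma prop_persist (P : Profile M W) {m : M} {a b : ℕ} (hab : a ≤ b)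
    (ha : daProp P (iterR P a) m = (daMatch P).menMatch m) :
    daProp P (iterR P b) m = (daMatch P).menMatch m := by
  induction b with
  | zero => cases Nat.le_zero.mp hab; exact ha
  | succ b ih =>
    rcases Nat.lt_or_ge a (b+1) with h' | h'
    · have hb := ih (Nat.lt_succ_iff.mp h')
      refine ole_antisymm (P.menPref m) ?_ ?_
      · rw [← hb]
        exact prop_anti P m (iterR_subset_succ P b m)
      · exact le_prop_iter P (b+1) m
    · cases Nat.le_antisymm hab h'; exact ha

lemma ffirst_ex (P : Profile M W) (m : M) :
    ∃ n, daProp P (iterR P n) m = (daMatch P).menMatch m := ⟨daN P, rfl⟩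

noncomputable def ffirst (P : Profile M W) (m : M) : ℕ := Nat.find (ffirst_ex P m)

lemma ffirst_spec (P : Profile M W) (m : M) :
    daProp P (iterR P (ffirst P m)) m = (daMatch P).menMatch m := Nat.find_spec (ffirst_ex P m)

lemma ffirst_le_daN (P : Profile M W) (m : M) : ffirst P m ≤ daN P :=
  Nat.find_le rfl

lemma ffirst_persist (P : Profile M W) {m : M} {n : ℕ} (h : ffirst P m ≤ n) :
    daProp P (iterR P n) m = (daMatch P).menMatch m :=
  prop_persist P h (ffirst_spec P m)


/-- a man strictly improving over the men-optimal stable match must be matched -/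
lemma matched_of_improve (P : Profile M W) (μ' : Matching M W) {m : M}
    (h : (P.menPref m).lt ((daMatch P).menMatch m) (μ'.menMatch m)) :
    ∃ w, μ'.menMatch m = some w := by
  rcases hm : μ'.menMatch m with _ | w
  · rw [hm] at h
    exact absurd (none_le_prop P (daR P) m) (olt_not_le _ h)
  · exact ⟨w, rfl⟩

/-- Gale–Sotomayor Blocking Lemma -/
lemma blocking_lemma (P : Profile M W) (μ' : Matching M W)
    (hIR : IndividuallyRational μ' P)
    (hne : ∃ m, (P.menPref m).lt ((daMatch P).menMatch m) (μ'.menMatch m)) :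
    ∃ m w, ¬ (P.menPref m).lt ((daMatch P).menMatch m) (μ'.menMatch m) ∧
      Blocks m w μ' P := by
  classical
  set μ := daMatch P with hμdef
  set Mp : M → Prop := fun m => (P.menPref m).lt (μ.menMatch m) (μ'.menMatch m) with hMp
  obtain ⟨m₀, hm₀⟩ := hne
  by_cases hcase : ∀ m', Mp m' → ∃ m, Mp m ∧ μ.menMatch m = μ'.menMatch m'
  · -- Case 2 : every coalition man's partner is a coalition man's DA-partner
    -- first, surjectivity
    set S : Finset M := Finset.univ.filter Mp with hS
    have hmemS : ∀ m, m ∈ S ↔ Mp m := by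
      intro m; simp [hS]
    have hm₀S : m₀ ∈ S := (hmemS m₀).mpr hm₀
    set f : M → M := fun m' => if h : ∃ m, Mp m ∧ μ.menMatch m = μ'.menMatch m' then
      h.choose else m' with hf
    have hfS : ∀ m' ∈ S, f m' ∈ S ∧ μ.menMatch (f m') = μ'.menMatch m' := by
      intro m' hm'
      have hx := hcase m' ((hmemS m').mp hm')
      rw [hf]; dsimp only
      rw [dif_pos hx]
      exact ⟨(hmemS _).mpr hx.choose_spec.1, hx.choose_spec.2⟩
    have hinj : ∀ a₁ a₂, a₁ ∈ S → a₂ ∈ S → f a₁ = f a₂ → a₁ = a₂ := by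
      intro a₁ a₂ h₁ h₂ he
      have e1 := (hfS a₁ h₁).2
      have e2 := (hfS a₂ h₂).2
      rw [he, e2] at e1
      obtain ⟨w₁, hw₁⟩ := matched_of_improve P μ' ((hmemS a₁).mp h₁)
      have ha₁ : μ'.womenMatch w₁ = some a₁ := (μ'.consistent a₁ w₁).mp hw₁
      have ha₂ : μ'.womenMatch w₁ = some a₂ := (μ'.consistent a₂ w₁).mp (e1 ▸ hw₁)
      exact Option.some_inj.mp (ha₁ ▸ ha₂ ▸ rfl : some a₂ = some a₁) |>.symm ▸ rfl
    have hsurj : ∀ m ∈ S, ∃ m' ∈ S, μ'.menMatch m' = μ.menMatch m := by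
      intro m hm
      obtain ⟨a, ha, hae⟩ := Finset.surj_on_of_inj_on_of_card_le
        (fun a _ => f a) (fun a ha => (hfS a ha).1)
        (fun a₁ a₂ h₁ h₂ he => hinj a₁ a₂ h₁ h₂ he) (le_refl S.card) m hm
      exact ⟨a, ha, by rw [← (hfS a ha).2, ← hae]⟩
    -- pick the man with the latest first-proposal to his DA-partner
    obtain ⟨m₁, hm₁S, hmax⟩ := Finset.exists_max_image S (ffirst P) ⟨m₀, hm₀S⟩
    set n₁ := ffirst P m₁ with hn₁
    obtain ⟨m', hm'S, hm'e⟩ := hsurj m₁ hm₁S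
    obtain ⟨w, hw'⟩ := matched_of_improve P μ' ((hmemS m').mp hm'S)
    have hμm₁ : μ.menMatch m₁ = some w := by rw [← hm'e, hw']
    have hwom' : μ'.womenMatch w = some m' := (μ'.consistent m' w).mp hw'
    have hμwom : μ.womenMatch w = some m₁ := (μ.consistent m₁ w).mp hμm₁
    -- n₁ ≥ 1
    have hn₁pos : 1 ≤ n₁ := by
      by_contra hn
      have h0 : n₁ = 0 := by omega
      have hsp := ffirst_spec P m₁
      rw [← hn₁, h0] at hsp
      have := top_prop P m₁ (μ'.menMatch m₁)
      rw [hsp] at this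
      exact olt_not_le _ ((hmemS m₁).mp hm₁S) this
    have hprev : daProp P (iterR P (n₁ - 1)) m₁ ≠ (daMatch P).menMatch m₁ :=
      Nat.find_min (ffirst_ex P m₁)
        (by have he : Nat.find (ffirst_ex P m₁) = n₁ := rfl; omega)
    -- w holds m₁ from round n₁ on (up to daN)
    have hholdn₁ : ∀ n, n₁ ≤ n → n ≤ daN P → daHold P (iterR P n) w = some m₁ := by
      intro n hn hN
      refine ole_antisymm (P.womenPref w) ?_ ?_
      · have h1 := hold_mono P hN w
        have h2 : daHold P (iterR P (daN P)) w = some m₁ := hμwom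
        rw [h2] at h1
        exact h1
      · apply le_hold
        rw [ffirst_persist P hn, hμm₁]
    -- m' was rejected by w at some round r < n₁
    have hwR : w ∈ iterR P (daN P) m' := by
      by_contra hwR
      have := le_prop P (iterR P (daN P)) hwR
      have h2 : daProp P (iterR P (daN P)) m' = μ.menMatch m' := rfl
      rw [h2] at this
      have hlt : (P.menPref m').lt (μ.menMatch m') (μ'.menMatch m') := (hmemS m').mp hm'S
      rw [hw'] at hlt
      exact olt_not_le _ hlt this
    have hrex : ∃ n, w ∈ iterR P (n + 1) m' := by
      refine ⟨daN P, ?_⟩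
      have : iterR P (daN P + 1) = iterR P (daN P) := daN_fix P
      rw [this]
      exact hwR
    set r := Nat.find hrex with hr
    have hr1 : w ∈ iterR P (r + 1) m' := Nat.find_spec hrex
    have hr0 : w ∉ iterR P r m' := by
      rcases Nat.eq_zero_or_pos r with h0 | hp
      · rw [h0]; simp [iterR]
      · have := Nat.find_min hrex (show r - 1 < r by omega)
        rw [show r - 1 + 1 = r by omega] at this
        exact this
    have hrstep := (mem_step_iff P (iterR P r) m' w).mp hr1
    rcases hrstep with hmem | ⟨hpr, hhr⟩
    · exact absurd hmem hr0
    have hltr : (P.womenPref w).lt (some m') (daHold P (iterR P r) w) :=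
      olt_of_le_ne _ (le_hold P _ hpr) (fun he => hhr he.symm)
    have hrlt : r < n₁ := by
      have hne' : daProp P (iterR P r) m' ≠ μ.menMatch m' := by
        rw [hpr]
        intro he
        have hlt : (P.menPref m').lt (μ.menMatch m') (μ'.menMatch m') := (hmemS m').mp hm'S
        rw [hw', ← he] at hlt
        exact olt_ne _ hlt rfl
      have hfm' : r < ffirst P m' := by
        by_contra hh
        exact hne' (ffirst_persist P (by omega))
      exact lt_of_lt_of_le hfm' (hmax m' hm'S)
    -- previous holder m₂ at round n₁ - 1
    have hmono := hold_mono P (show r ≤ n₁ - 1 by omega) w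
    have hltprev : (P.womenPref w).lt (some m') (daHold P (iterR P (n₁ - 1)) w) :=
      olt_of_lt_of_le _ hltr hmono
    obtain ⟨m₂, hm₂⟩ : ∃ m₂, daHold P (iterR P (n₁ - 1)) w = some m₂ := by
      rcases hh : daHold P (iterR P (n₁ - 1)) w with _ | m₂
      · rw [hh] at hltprev
        have hnle : (P.womenPref w).le none (some m') := by
          have := hIR.2 w; rwa [hwom'] at this
        exact absurd (olt_of_lt_of_le _ hltprev hnle) (fun hc => olt_ne _ hc rfl)
      · exact ⟨m₂, rfl⟩
    have hm₂prop : daProp P (iterR P (n₁ - 1)) m₂ = some w := hold_mem P _ hm₂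
    have hm₂ne₁ : m₂ ≠ m₁ := by
      intro he
      rw [he] at hm₂prop
      exact hprev (by rw [hm₂prop, hμm₁])
    -- m₂ still proposes to w at round n₁
    have hstep₂ : daStep P (iterR P (n₁ - 1)) m₂ = iterR P (n₁ - 1) m₂ :=
      step_eq_of_held P _ hm₂prop hm₂
    have hpn₁ : daProp P (iterR P n₁) m₂ = some w := by
      have : iterR P n₁ = daStep P (iterR P (n₁ - 1)) := by
        rw [show n₁ = (n₁ - 1) + 1 by omega]
        rfl
      rw [this, prop_congr P hstep₂]
      exact hm₂prop
    have hμm₂ne : μ.menMatch m₂ ≠ some w := by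
      intro he
      have := (μ.consistent m₂ w).mp he
      rw [hμwom] at this
      exact hm₂ne₁ (Option.some_inj.mp this.symm)
    have hnotMp₂ : ¬ Mp m₂ := by
      intro hMp₂
      have := ffirst_persist P (show ffirst P m₂ ≤ n₁ from hmax m₂ ((hmemS m₂).mpr hMp₂))
      rw [hpn₁] at this
      exact hμm₂ne this.symm
    refine ⟨m₂, w, hnotMp₂, ?_, ?_⟩
    · -- man side
      have h1 : (P.menPref m₂).le (μ.menMatch m₂) (some w) := by
        have := le_prop_iter P n₁ m₂
        rwa [hpn₁] at this
      have h2 : (P.menPref m₂).lt (μ.menMatch m₂) (some w) := olt_of_le_ne _ h1 hμm₂ne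
      have h3 : (P.menPref m₂).le (μ'.menMatch m₂) (μ.menMatch m₂) := ole_of_not_lt _ hnotMp₂
      exact olt_of_le_of_lt _ h3 h2
    · -- woman side
      rw [hwom']
      rw [hm₂] at hltprev
      exact hltprev
  · -- Case 1 : some coalition man's partner is not a DA-partner of the coalition
    push_neg at hcase
    obtain ⟨mA, hmA, hA⟩ := hcase
    obtain ⟨w, hw⟩ := matched_of_improve P μ' hmA
    have hwomA : μ'.womenMatch w = some mA := (μ'.consistent mA w).mp hw
    have hnb := (daMatch_stable P).2 mA w
    have hb1 : (P.menPref mA).lt (μ.menMatch mA) (some w) := by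
      have h' : (P.menPref mA).lt (μ.menMatch mA) (μ'.menMatch mA) := hmA
      rwa [hw] at h'
    have hb2 : (P.womenPref w).le (some mA) (μ.womenMatch w) := by
      apply ole_of_not_lt
      intro hlt
      exact hnb ⟨hb1, hlt⟩
    have hμwne : μ.womenMatch w ≠ some mA := by
      intro he
      have := (μ.consistent mA w).mpr he
      rw [this] at hb1
      exact olt_ne _ hb1 rfl
    obtain ⟨m₂, hm₂⟩ : ∃ m₂, μ.womenMatch w = some m₂ := by
      rcases hh : μ.womenMatch w with _ | m₂
      · rw [hh] at hb2
        have hnle : (P.womenPref w).le none (some mA) := by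
          have := hIR.2 w; rwa [hwomA] at this
        exact absurd (ole_antisymm _ hb2 hnle) (by simp)
      · exact ⟨m₂, rfl⟩
    have hm₂ne : m₂ ≠ mA := fun he => hμwne (he ▸ hm₂)
    have hμm₂ : μ.menMatch m₂ = some w := (μ.consistent m₂ w).mpr hm₂
    have hnotMp₂ : ¬ Mp m₂ := by
      intro hMp₂
      exact hA m₂ hMp₂ (by rw [hμm₂, hw])
    refine ⟨m₂, w, hnotMp₂, ?_, ?_⟩
    · have h3 : (P.menPref m₂).le (μ'.menMatch m₂) (μ.menMatch m₂) := ole_of_not_lt _ hnotMp₂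
      have h4 : μ'.menMatch m₂ ≠ some w := by
        intro he
        have := (μ'.consistent m₂ w).mp he
        rw [hwomA] at this
        exact hm₂ne (Option.some_inj.mp this.symm)
      rw [hμm₂] at h3
      exact olt_of_le_ne _ h3 h4
    · rw [hwomA]
      rw [hm₂] at hb2
      exact olt_of_le_ne _ (by
        have : (P.womenPref w).le (some mA) (some m₂) := hb2
        exact this) (by simpa using hm₂ne.symm)

end DA

/-- Dubins-Freedman: no nonempty coalition of men can manipulate
the MPDA rule. -/
theorem no_coalition_of_men_manipulates [Fintype M] [Fintype W] :
    ¬ ∃ (P Q : Profile M W) (Sm : Set M), Sm.Nonempty ∧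
        (∀ m ∉ Sm, Q.menPref m = P.menPref m) ∧
        (∀ w : W, Q.womenPref w = P.womenPref w) ∧
        (∀ m ∈ Sm, (P.menPref m).lt ((mpda P).menMatch m) ((mpda Q).menMatch m)) := by
  rintro ⟨P, Q, Sm, ⟨m₀, hm₀⟩, hQP, hQW, hlt⟩
  rw [mpda_eq P, mpda_eq Q] at hlt
  set ν := daMatch Q with hν
  have hνQ : Stable ν Q := daMatch_stable Q
  have hIR : IndividuallyRational ν P := by
    constructor
    · intro m
      by_cases hm : m ∈ Sm
      · exact ole_trans _ ((daMatch_stable P).1.1 m) (olt_le _ (hlt m hm))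
      · rw [← hQP m hm]
        exact hνQ.1.1 m
    · intro w
      rw [← hQW w]
      exact hνQ.1.2 w
  have hne : ∃ m, (P.menPref m).lt ((daMatch P).menMatch m) (ν.menMatch m) :=
    ⟨m₀, hlt m₀ hm₀⟩
  obtain ⟨m, w, hnot, hbl⟩ := blocking_lemma P ν hIR hne
  have hmS : m ∉ Sm := fun hm => hnot (hlt m hm)
  apply hνQ.2 m w
  refine ⟨?_, ?_⟩
  · rw [hQP m hmS]
    exact hbl.1
  · rw [hQW w]
    exact hbl.2
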